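/- Let A ∈ ℝ^{m×M} have nonnegative entries with every column summing to 1, let b ∈ ℝ^m have positive entries with Σ_i b_i = 1, and let q ∈ ℝ^M have positive entries with (Aq)_i > 0 for all i. Define q̃ ∈ ℝ^{m×M} by q̃_{ij} := A_{ij}·q_j·b_i/(Aq)_i, the GIS iterate q'_j := q_j·exp(Σ_{i=1}^m A_{ij}·log(b_i/(Aq)_i)), and the lifting F(p) ∈ ℝ^{m×M}, F(p)_{ij} := A_{ij}·p_j. Then: (i) Σ_{i,j} q̃_{ij} = 1; (ii) for every p ∈ Δ_M, KL(F(p), q̃) = KL(p, q') + 1 − Σ_{j=1}^M q'_j; (iii) consequently, the unique minimizer of p ↦ KL(F(p), q̃) over p ∈ Δ_M is the normalized GIS iterate q'/(Σ_{j=1}^M q'_j). -/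

import Mathlib

lemma gibbs_pos {ι : Type*} [Fintype ι] {f g : ι → ℝ} (hf : ∀ j, 0 ≤ f j)
    (hg : ∀ j, 0 < g j) (hne : f ≠ g) :
    0 < ∑ j, (f j * Real.log (f j / g j) - f j + g j) := by
  have key : ∀ j, 0 ≤ f j * Real.log (f j / g j) - f j + g j := by
    intro j
    rcases eq_or_lt_of_le (hf j) with h | h
    · simp [← h, (hg j).le]
    · have hgf := Real.log_le_sub_one_of_pos (div_pos (hg j) h)
      have hlog : Real.log (g j / f j) = Real.log (g j) - Real.log (f j) :=
        Real.log_div (hg j).ne' h.ne'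
      have hlog2 : Real.log (f j / g j) = Real.log (f j) - Real.log (g j) :=
        Real.log_div h.ne' (hg j).ne'
      have hfg : f j * (g j / f j) = g j := by field_simp
      nlinarith [h]
  obtain ⟨j0, hj0⟩ : ∃ j, f j ≠ g j := by
    by_contra hc; push_neg at hc; exact hne (funext hc)
  have hpos : 0 < f j0 * Real.log (f j0 / g j0) - f j0 + g j0 := by
    rcases eq_or_lt_of_le (hf j0) with h | h
    · simpa [← h] using hg j0
    · have hne1 : g j0 / f j0 ≠ 1 := fun hcon =>
        hj0 ((div_eq_one_iff_eq h.ne').mp hcon).symm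
      have hgf := Real.log_lt_sub_one_of_pos (div_pos (hg j0) h) hne1
      have hlog : Real.log (g j0 / f j0) = Real.log (g j0) - Real.log (f j0) :=
        Real.log_div (hg j0).ne' h.ne'
      have hlog2 : Real.log (f j0 / g j0) = Real.log (f j0) - Real.log (g j0) :=
        Real.log_div h.ne' (hg j0).ne'
      have hfg : f j0 * (g j0 / f j0) = g j0 := by field_simp
      nlinarith [h]
  exact Finset.sum_pos' (fun j _ => key j) ⟨j0, Finset.mem_univ j0, hpos⟩

/-- Kullback--Leibler divergence of two nonnegative families over a common
finite index set. -/
noncomputable def KL {ι : Type*} [Fintype ι] (p q : ι → ℝ) : ℝ :=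
  ∑ j, (p j * Real.log (p j / q j) - p j + q j)

/-- The probability simplex in `ℝ^M`. -/
def simplex (M : ℕ) : Set (Fin M → ℝ) :=
  {x | (∀ j, 0 ≤ x j) ∧ ∑ j, x j = 1}

/-- The GIS step as a two-step projection: with
`q̃ᵢⱼ = Aᵢⱼ qⱼ bᵢ/(Aq)ᵢ`, the GIS iterate `q'` and the lifting
`F(p)ᵢⱼ = Aᵢⱼ pⱼ`, we have (i) `∑ᵢⱼ q̃ᵢⱼ = 1`, (ii) for `p ∈ Δ_M`,
`KL(F(p), q̃) = KL(p, q') + 1 − ∑ⱼ q'ⱼ`, and (iii) the unique minimizer of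
`p ↦ KL(F(p), q̃)` over `Δ_M` is the normalized GIS iterate. -/
theorem stmt9 {m M : ℕ} (A : Fin m → Fin M → ℝ) (b : Fin m → ℝ)
    (hA0 : ∀ i j, 0 ≤ A i j)
    (hAcol : ∀ j, ∑ i, A i j = 1)
    (hb0 : ∀ i, 0 < b i)
    (hbsum : ∑ i, b i = 1)
    (q : Fin M → ℝ) (hq : ∀ j, 0 < q j)
    (hAq : ∀ i, 0 < ∑ j, A i j * q j)
    (qt : Fin m × Fin M → ℝ)
    (hqt : qt = fun ij => A ij.1 ij.2 * q ij.2 * (b ij.1 / ∑ j, A ij.1 j * q j))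
    (q' : Fin M → ℝ)
    (hq' : q' = fun j =>
      q j * Real.exp (∑ i, A i j * Real.log (b i / ∑ j', A i j' * q j')))
    (F : (Fin M → ℝ) → Fin m × Fin M → ℝ)
    (hF : F = fun p ij => A ij.1 ij.2 * p ij.2) :
    (∑ ij : Fin m × Fin M, qt ij = 1) ∧
    (∀ p ∈ simplex M, KL (F p) qt = KL p q' + 1 - ∑ j, q' j) ∧
    ((fun j => q' j / ∑ j', q' j') ∈ simplex M ∧
      ∀ p ∈ simplex M, p ≠ (fun j => q' j / ∑ j', q' j') →
        KL (F (fun j => q' j / ∑ j', q' j')) qt < KL (F p) qt) := by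
  -- m and M are positive
  have hm : 0 < m := by
    rcases Nat.eq_zero_or_pos m with h | h
    · subst h; simp at hbsum
    · exact h
  have hM : 0 < M := by
    rcases Nat.eq_zero_or_pos M with h | h
    · exfalso; have := hAq ⟨0, hm⟩; subst h; simp at this
    · exact h
  -- abbreviations
  set c : Fin m → ℝ := fun i => b i / ∑ j', A i j' * q j' with hcdef
  have hc : ∀ i, 0 < c i := fun i => div_pos (hb0 i) (hAq i)
  set s : Fin M → ℝ := fun j => ∑ i, A i j * Real.log (c i) with hsdef
  have hq'eq : q' = fun j => q j * Real.exp (s j) := hq'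
  have hq'pos : ∀ j, 0 < q' j := by
    intro j; rw [hq'eq]; exact mul_pos (hq j) (Real.exp_pos _)
  have hqteq : qt = fun ij : Fin m × Fin M => A ij.1 ij.2 * q ij.2 * c ij.1 := hqt
  -- column-sum swap lemma
  have hsw : ∀ (x : Fin M → ℝ), ∑ i, ∑ j, A i j * x j = ∑ j, x j := by
    intro x
    rw [Finset.sum_comm]
    calc ∑ j, ∑ i, A i j * x j = ∑ j, (∑ i, A i j) * x j := by
          simp_rw [Finset.sum_mul]
      _ = ∑ j, x j := by simp_rw [hAcol, one_mul]
  -- Part (i)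
  have part1 : ∑ ij : Fin m × Fin M, qt ij = 1 := by
    rw [hqteq, Fintype.sum_prod_type]
    have h1 : ∀ i, ∑ j, A i j * q j * c i = b i := by
      intro i
      rw [← Finset.sum_mul, hcdef, mul_comm, div_mul_cancel₀ _ (hAq i).ne']
    rw [Finset.sum_congr rfl (fun i _ => h1 i), hbsum]
  -- Part (ii), left side
  have key : ∀ p : Fin M → ℝ, (∀ j, 0 ≤ p j) → ∑ j, p j = 1 →
      KL (F p) qt = ∑ j, p j * (Real.log (p j / q j) - s j) := by
    intro p hp0 hp1
    rw [hF, hqteq, KL]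
    have hlog : ∀ ij : Fin m × Fin M,
        A ij.1 ij.2 * p ij.2 * Real.log ((A ij.1 ij.2 * p ij.2) /
          (A ij.1 ij.2 * q ij.2 * c ij.1))
        = A ij.1 ij.2 * (p ij.2 * (Real.log (p ij.2 / q ij.2) - Real.log (c ij.1))) := by
      rintro ⟨i, j⟩
      simp only
      rcases eq_or_lt_of_le (hA0 i j) with hA | hA
      · simp [← hA]
      rcases eq_or_lt_of_le (hp0 j) with hp | hp
      · simp [← hp]
      rw [mul_assoc]
      congr 1
      have h1 : A i j * p j / (A i j * q j * c i) = p j / q j / c i := by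
        rw [mul_assoc, mul_div_mul_left _ _ hA.ne', ← div_div]
      rw [h1, Real.log_div (div_pos hp (hq j)).ne' (hc i).ne']
    calc ∑ ij : Fin m × Fin M,
          (A ij.1 ij.2 * p ij.2 * Real.log ((A ij.1 ij.2 * p ij.2) /
            (A ij.1 ij.2 * q ij.2 * c ij.1))
           - A ij.1 ij.2 * p ij.2 + A ij.1 ij.2 * q ij.2 * c ij.1)
        = (∑ ij : Fin m × Fin M, A ij.1 ij.2 *
            (p ij.2 * (Real.log (p ij.2 / q ij.2) - Real.log (c ij.1))))
          - (∑ ij : Fin m × Fin M, A ij.1 ij.2 * p ij.2)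
          + (∑ ij : Fin m × Fin M, A ij.1 ij.2 * q ij.2 * c ij.1) := by
          rw [Finset.sum_add_distrib, Finset.sum_sub_distrib]
          congr 2
          exact Finset.sum_congr rfl (fun ij _ => hlog ij)
      _ = (∑ ij : Fin m × Fin M, A ij.1 ij.2 *
            (p ij.2 * (Real.log (p ij.2 / q ij.2) - Real.log (c ij.1)))) - 1 + 1 := by
          rw [← hqteq, part1]
          congr 2
          rw [Fintype.sum_prod_type, hsw (fun j => p j), hp1]
      _ = ∑ j, p j * (Real.log (p j / q j) - s j) := by
          rw [Fintype.sum_prod_type]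
          have hA1 : ∑ i, ∑ j, A i j * (p j * Real.log (p j / q j))
              = ∑ j, p j * Real.log (p j / q j) := hsw _
          have step : ∀ i, ∑ j, A i j * (p j * (Real.log (p j / q j) - Real.log (c i)))
              = (∑ j, A i j * (p j * Real.log (p j / q j)))
                - ∑ j, A i j * p j * Real.log (c i) := by
            intro i
            rw [← Finset.sum_sub_distrib]
            exact Finset.sum_congr rfl (fun j _ => by ring)
          rw [Finset.sum_congr rfl (fun i _ => step i), Finset.sum_sub_distrib, hA1]
          have h2 : ∑ i, ∑ j, A i j * p j * Real.log (c i) = ∑ j, p j * s j := by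
            rw [Finset.sum_comm]
            refine Finset.sum_congr rfl (fun j _ => ?_)
            rw [hsdef, Finset.mul_sum]
            exact Finset.sum_congr rfl (fun i _ => by ring)
          rw [h2]
          have h3 : ∑ j, (p j * Real.log (p j / q j) - p j * s j)
              = ∑ j, p j * (Real.log (p j / q j) - s j) :=
            Finset.sum_congr rfl (fun j _ => by ring)
          rw [← Finset.sum_sub_distrib, h3]; ring
  -- Part (ii), right side
  have key2 : ∀ p : Fin M → ℝ, (∀ j, 0 ≤ p j) → ∑ j, p j = 1 →
      KL p q' + 1 - ∑ j, q' j = ∑ j, p j * (Real.log (p j / q j) - s j) := by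
    intro p hp0 hp1
    rw [KL]
    have hterm : ∀ j, p j * Real.log (p j / q' j) = p j * (Real.log (p j / q j) - s j) := by
      intro j
      rcases eq_or_lt_of_le (hp0 j) with hp | hp
      · simp [← hp]
      congr 1
      rw [hq'eq]
      have h1 : p j / (q j * Real.exp (s j)) = (p j / q j) / Real.exp (s j) := by
        rw [div_div]
      rw [h1, Real.log_div (div_pos hp (hq j)).ne' (Real.exp_ne_zero _),
        Real.log_exp]
    have h4 : ∑ j, (p j * Real.log (p j / q' j) - p j + q' j)
        = (∑ j, p j * (Real.log (p j / q j) - s j)) - 1 + ∑ j, q' j := by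
      calc ∑ j, (p j * Real.log (p j / q' j) - p j + q' j)
          = ∑ j, (p j * (Real.log (p j / q j) - s j) - p j + q' j) :=
            Finset.sum_congr rfl (fun j _ => by rw [hterm j])
        _ = (∑ j, p j * (Real.log (p j / q j) - s j)) - (∑ j, p j) + ∑ j, q' j := by
            rw [Finset.sum_add_distrib, Finset.sum_sub_distrib]
        _ = (∑ j, p j * (Real.log (p j / q j) - s j)) - 1 + ∑ j, q' j := by
            rw [hp1]
    rw [h4]; ring
  have part2 : ∀ p ∈ simplex M, KL (F p) qt = KL p q' + 1 - ∑ j, q' j := by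
    rintro p ⟨hp0, hp1⟩
    rw [key p hp0 hp1, key2 p hp0 hp1]
  -- Part (iii)
  have hS : 0 < ∑ j', q' j' :=
    Finset.sum_pos (fun j _ => hq'pos j) ⟨⟨0, hM⟩, Finset.mem_univ _⟩
  set ps : Fin M → ℝ := fun j => q' j / ∑ j', q' j' with hpsdef
  have hpspos : ∀ j, 0 < ps j := fun j => div_pos (hq'pos j) hS
  have hps1 : ∑ j, ps j = 1 := by
    rw [hpsdef]; rw [← Finset.sum_div, div_self hS.ne']
  refine ⟨part1, part2, ⟨fun j => (hpspos j).le, hps1⟩, ?_⟩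
  rintro p ⟨hp0, hp1⟩ hne
  rw [part2 p ⟨hp0, hp1⟩, part2 ps ⟨fun j => (hpspos j).le, hps1⟩]
  have hterm1 : ∀ j, p j * Real.log (p j / q' j)
      = p j * Real.log (p j / ps j) - p j * Real.log (∑ j', q' j') := by
    intro j
    rcases eq_or_lt_of_le (hp0 j) with hp | hp
    · simp [← hp]
    have h1 : p j / q' j = (p j / ps j) / (∑ j', q' j') := by
      rw [hpsdef]
      field_simp
    rw [h1, Real.log_div (div_pos hp (hpspos j)).ne' hS.ne', mul_sub]
  have hterm2 : ∀ j, ps j * Real.log (ps j / q' j)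
      = -(ps j * Real.log (∑ j', q' j')) := by
    intro j
    have h1 : ps j / q' j = 1 / (∑ j', q' j') := by
      rw [hpsdef]
      field_simp
      exact div_self (hq'pos j).ne'
    rw [h1, one_div, Real.log_inv]
    ring
  have hdiff : KL p q' - KL ps q'
      = ∑ j, (p j * Real.log (p j / ps j) - p j + ps j) := by
    calc KL p q' - KL ps q'
        = ∑ j, ((p j * Real.log (p j / q' j) - p j + q' j)
            - (ps j * Real.log (ps j / q' j) - ps j + q' j)) := by
          rw [KL, KL, ← Finset.sum_sub_distrib]
      _ = ∑ j, ((p j * Real.log (p j / ps j) - p j + ps j)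
            + (ps j - p j) * Real.log (∑ j', q' j')) := by
          exact Finset.sum_congr rfl (fun j _ => by
            rw [hterm1 j, hterm2 j]; ring)
      _ = (∑ j, (p j * Real.log (p j / ps j) - p j + ps j))
            + (∑ j, (ps j - p j)) * Real.log (∑ j', q' j') := by
          rw [Finset.sum_add_distrib, ← Finset.sum_mul]
      _ = ∑ j, (p j * Real.log (p j / ps j) - p j + ps j) := by
          rw [Finset.sum_sub_distrib, hps1, hp1]; ring
  have hgibbs := gibbs_pos hp0 hpspos hne
  linarith [hdiff, hgibbs]
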